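/- For every integer n ≥ 1, the polynomial G_n has degree n with leading coefficient p_n^(n) = 2^n/(n!·(n+1)!), and there exist n pairwise distinct real numbers r_1, …, r_n with r_k ≤ 0 for all k (in fact r_1 = 0) such that G_n(z) = (2^n/(n!·(n+1)!))·Π_{k=1}^{n}(z − r_k) for all z. In particular, all complex roots of G_n are real, simple and lie in (−∞, 0]. -/

import Mathlib

open Finset Polynomial

noncomputable def p (n k : ℕ) : ℝ :=
  2 ^ k *
    ∑ i ∈ (Fintype.piFinset fun _ : Fin k => Finset.Icc 1 n).filter
        (fun i => ∑ j, i j = n),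
      ∏ j : Fin k,
        (i j : ℝ) /
          (((∑ l ∈ Finset.univ.filter (fun l => l ≤ j), i l : ℕ) : ℝ) *
            (((∑ l ∈ Finset.univ.filter (fun l => l ≤ j), i l : ℕ) : ℝ) + 1))

lemma p_zero_zero : p 0 0 = 1 := by
  simp [p]

lemma p_zero (n : ℕ) (hn : 1 ≤ n) : p n 0 = 0 := by
  have : ((Fintype.piFinset fun _ : Fin 0 => Finset.Icc 1 n).filter
      (fun i => ∑ j, i j = n)) = ∅ := by
    ext i
    simp only [Finset.mem_filter, Finset.notMem_empty, iff_false, not_and]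
    intro _ h
    simp at h
    omega
  simp [p, this]
  omega


lemma p_of_lt (n k : ℕ) (h : n < k) : p n k = 0 := by
  have : ((Fintype.piFinset fun _ : Fin k => Finset.Icc 1 n).filter
      (fun i => ∑ j, i j = n)) = ∅ := by
    ext i
    simp only [Finset.mem_filter, Fintype.mem_piFinset, Finset.mem_Icc, Finset.notMem_empty,
      iff_false, not_and]
    intro hi hsum
    have : k ≤ ∑ j, i j := by
      calc k = ∑ _j : Fin k, 1 := by simp
        _ ≤ ∑ j, i j := Finset.sum_le_sum fun j _ => (hi j).1
    omega
  simp [p, this]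

lemma partial_sum_castSucc {k : ℕ} (i : Fin (k+1) → ℕ) (j : Fin k) :
    ∑ l ∈ Finset.univ.filter (fun l => l ≤ Fin.castSucc j), i l
      = ∑ l ∈ Finset.univ.filter (fun l => l ≤ j), i (Fin.castSucc l) := by
  rw [Finset.sum_filter, Finset.sum_filter, Fin.sum_univ_castSucc]
  have hlast : ¬ (Fin.last k ≤ Fin.castSucc j) := by
    simp only [Fin.le_def, Fin.val_last, Fin.coe_castSucc, not_le]
    exact j.isLt
  simp only [hlast, if_false, add_zero]
  refine Finset.sum_congr rfl fun l _ => ?_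
  congr 1

lemma filter_le_last {k : ℕ} :
    Finset.univ.filter (fun l : Fin (k+1) => l ≤ Fin.last k) = Finset.univ := by
  ext l; simp [Fin.le_last]

lemma p_rec (n k : ℕ) (hn : 1 ≤ n) :
    (n : ℝ) * ((n : ℝ) + 1) * p n (k + 1) =
      2 * ∑ m ∈ Finset.range n, ((n : ℝ) - (m : ℝ)) * p m k := by
  classical
  have hnR : (0:ℝ) < (n:ℝ) := by exact_mod_cast hn
  have key : ∑ i ∈ (Fintype.piFinset fun _ : Fin (k+1) => Finset.Icc 1 n).filter
        (fun i => ∑ j, i j = n),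
      ∏ j : Fin (k+1),
        (i j : ℝ) /
          (((∑ l ∈ Finset.univ.filter (fun l => l ≤ j), i l : ℕ) : ℝ) *
            (((∑ l ∈ Finset.univ.filter (fun l => l ≤ j), i l : ℕ) : ℝ) + 1))
      = ∑ x ∈ (Finset.range n).sigma (fun m =>
            (Fintype.piFinset fun _ : Fin k => Finset.Icc 1 m).filter
              (fun i => ∑ j, i j = m)),
          (∏ j : Fin k,
            (x.2 j : ℝ) /
              (((∑ l ∈ Finset.univ.filter (fun l => l ≤ j), x.2 l : ℕ) : ℝ) *
                (((∑ l ∈ Finset.univ.filter (fun l => l ≤ j), x.2 l : ℕ) : ℝ) + 1)))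
            * (((n - x.1 : ℕ) : ℝ) / ((n:ℝ) * ((n:ℝ) + 1))) := by
    refine Finset.sum_nbij'
      (fun i => ⟨n - i (Fin.last k), fun j => i (Fin.castSucc j)⟩)
      (fun x => Fin.snoc x.2 (n - x.1)) ?_ ?_ ?_ ?_ ?_
    · -- forward membership
      intro i hi
      simp only [Finset.mem_filter, Fintype.mem_piFinset, Finset.mem_Icc] at hi
      obtain ⟨hmem, hsum⟩ := hi
      have hlast1 : 1 ≤ i (Fin.last k) := (hmem _).1
      have hlastn : i (Fin.last k) ≤ n := by
        have := Finset.single_le_sum (f := i) (fun l _ => Nat.zero_le _)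
          (Finset.mem_univ (Fin.last k))
        omega
      have hsum' : (∑ j : Fin k, i (Fin.castSucc j)) = n - i (Fin.last k) := by
        have := Fin.sum_univ_castSucc i
        omega
      simp only [Finset.mem_sigma, Finset.mem_range, Finset.mem_filter,
        Fintype.mem_piFinset, Finset.mem_Icc]
      refine ⟨by omega, fun j => ⟨(hmem _).1, ?_⟩, hsum'⟩
      have := Finset.single_le_sum (f := fun j : Fin k => i (Fin.castSucc j))
        (fun l _ => Nat.zero_le _) (Finset.mem_univ j)
      omega
    · -- backward membership
      rintro ⟨m, i'⟩ hx
      simp only [Finset.mem_sigma, Finset.mem_range, Finset.mem_filter,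
        Fintype.mem_piFinset, Finset.mem_Icc] at hx
      obtain ⟨hm, hmem, hsum⟩ := hx
      simp only [Finset.mem_filter, Fintype.mem_piFinset, Finset.mem_Icc]
      constructor
      · intro j
        refine Fin.lastCases ?_ ?_ j
        · rw [Fin.snoc_last]; omega
        · intro l; rw [Fin.snoc_castSucc]
          exact ⟨(hmem l).1, le_trans (hmem l).2 (le_of_lt hm)⟩
      · rw [Fin.sum_univ_castSucc]
        simp only [Fin.snoc_castSucc, Fin.snoc_last]
        omega
    · -- left inverse
      intro i hi
      simp only [Finset.mem_filter, Fintype.mem_piFinset, Finset.mem_Icc] at hi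
      obtain ⟨hmem, hsum⟩ := hi
      have hlastn : i (Fin.last k) ≤ n := by
        have := Finset.single_le_sum (f := i) (fun l _ => Nat.zero_le _)
          (Finset.mem_univ (Fin.last k))
        omega
      funext j
      refine Fin.lastCases ?_ ?_ j
      · show (Fin.snoc (fun j => i (Fin.castSucc j)) (n - (n - i (Fin.last k))) : Fin (k+1) → ℕ)
          (Fin.last k) = i (Fin.last k)
        rw [Fin.snoc_last]; omega
      · intro l
        show (Fin.snoc (fun j => i (Fin.castSucc j)) (n - (n - i (Fin.last k))) : Fin (k+1) → ℕ)
          (Fin.castSucc l) = i (Fin.castSucc l)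
        rw [Fin.snoc_castSucc]
    · -- right inverse
      rintro ⟨m, i'⟩ hx
      simp only [Finset.mem_sigma, Finset.mem_range] at hx
      refine Sigma.ext ?_ (heq_of_eq ?_)
      · simp only [Fin.snoc_last]; omega
      · funext j
        simp only [Fin.snoc_castSucc]
    · -- values agree
      intro i hi
      simp only [Finset.mem_filter, Fintype.mem_piFinset, Finset.mem_Icc] at hi
      obtain ⟨hmem, hsum⟩ := hi
      have hlastn : i (Fin.last k) ≤ n := by
        have := Finset.single_le_sum (f := i) (fun l _ => Nat.zero_le _)
          (Finset.mem_univ (Fin.last k))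
        omega
      rw [Fin.prod_univ_castSucc]
      have hps : ∀ j : Fin k,
          (∑ l ∈ Finset.univ.filter (fun l => l ≤ Fin.castSucc j), i l)
            = ∑ l ∈ Finset.univ.filter (fun l => l ≤ j), i (Fin.castSucc l) :=
        fun j => partial_sum_castSucc i j
      have hlastsum : (∑ l ∈ Finset.univ.filter (fun l => l ≤ Fin.last k), i l) = n := by
        rw [filter_le_last]; exact hsum
      have hnum : ((n - (n - i (Fin.last k)) : ℕ) : ℝ) = (i (Fin.last k) : ℝ) := by
        congr 1; omega
      simp only [hps, hlastsum, hnum]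
  -- now the algebra
  simp only [p]
  rw [key, Finset.sum_sigma, ← mul_assoc, Finset.mul_sum, Finset.mul_sum]
  refine Finset.sum_congr rfl fun m hm => ?_
  have hmn : m < n := Finset.mem_range.mp hm
  dsimp only
  rw [← Finset.sum_mul]
  have hc : ((n - m : ℕ) : ℝ) = (n:ℝ) - (m:ℝ) := by
    push_cast [Nat.cast_sub hmn.le]; ring
  rw [hc]
  have hne : (n:ℝ) * ((n:ℝ) + 1) ≠ 0 := by positivity
  field_simp
  ring

noncomputable def G (n : ℕ) (z : ℝ) : ℝ :=
  ∑ k ∈ Finset.range (n + 1), p n k * z ^ k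

noncomputable def c (n : ℕ) : ℝ := 2 ^ n / ((n.factorial : ℝ) * ((n + 1).factorial : ℝ))

lemma p_diag (n : ℕ) : p n n = c n := by
  induction n with
  | zero => simp [p_zero_zero, c]
  | succ n ih =>
    have h := p_rec (n+1) n (by omega)
    have hsum : ∑ m ∈ Finset.range (n+1), (((n:ℝ)+1) - (m:ℝ)) * p m n = p n n := by
      rw [Finset.sum_range_succ]
      have : ∀ m ∈ Finset.range n, (((n:ℝ)+1) - (m:ℝ)) * p m n = 0 := by
        intro m hm
        rw [p_of_lt m n (Finset.mem_range.mp hm), mul_zero]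
      rw [Finset.sum_eq_zero this, zero_add]
      push_cast; ring_nf
    rw [ih] at hsum
    push_cast at h
    rw [hsum] at h
    have h2 : p (n+1) (n+1) = 2 * c n / (((n:ℝ)+1) * ((n:ℝ)+2)) := by
      have hne : ((n:ℝ)+1) * ((n:ℝ)+2) ≠ 0 := by positivity
      field_simp at h ⊢
      linarith [h]
    rw [h2, c, c]
    have f1 : ((n+1).factorial : ℝ) = ((n:ℝ)+1) * (n.factorial : ℝ) := by
      rw [Nat.factorial_succ]; push_cast; ring
    have f2 : ((n+2).factorial : ℝ) = ((n:ℝ)+2) * ((n+1).factorial : ℝ) := by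
      rw [show n+2 = (n+1)+1 from rfl, Nat.factorial_succ]; push_cast; ring
    have hf0 : (n.factorial : ℝ) ≠ 0 := Nat.cast_ne_zero.mpr n.factorial_ne_zero
    have hf1 : ((n+1).factorial : ℝ) ≠ 0 := Nat.cast_ne_zero.mpr (n+1).factorial_ne_zero
    rw [show n+1+1 = n+2 from rfl, f2, f1]
    field_simp
    ring

lemma G_sum_rec (n : ℕ) (z : ℝ) :
    (n:ℝ) * ((n:ℝ)+1) * G n z = 2 * z * ∑ m ∈ Finset.range n, ((n:ℝ) - (m:ℝ)) * G m z := by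
  rcases Nat.eq_zero_or_pos n with rfl | hn
  · simp
  -- G m z with m < n equals sum over range n of p m k z^k
  have hGm : ∀ m ∈ Finset.range n, G m z = ∑ k ∈ Finset.range n, p m k * z ^ k := by
    intro m hm
    have hmn : m < n := Finset.mem_range.mp hm
    rw [G]
    refine Finset.sum_subset ?_ ?_
    · intro k hk; simp only [Finset.mem_range] at hk ⊢; omega
    · intro k hk hk2
      simp only [Finset.mem_range, not_lt] at hk2
      rw [p_of_lt m k (by omega), zero_mul]
  rw [G, Finset.sum_range_succ', p_zero n hn]
  rw [zero_mul, add_zero, Finset.mul_sum]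
  have lhs_eq : ∀ k ∈ Finset.range n, (n:ℝ) * ((n:ℝ)+1) * (p n (k+1) * z ^ (k+1))
      = ∑ m ∈ Finset.range n, (2 * z) * (((n:ℝ) - (m:ℝ)) * (p m k * z ^ k)) := by
    intro k hk
    have := p_rec n k hn
    calc (n:ℝ) * ((n:ℝ)+1) * (p n (k+1) * z ^ (k+1))
        = ((n:ℝ) * ((n:ℝ)+1) * p n (k+1)) * z ^ (k+1) := by ring
      _ = (2 * ∑ m ∈ Finset.range n, ((n:ℝ) - (m:ℝ)) * p m k) * z ^ (k+1) := by rw [this]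
      _ = ∑ m ∈ Finset.range n, (2 * z) * (((n:ℝ) - (m:ℝ)) * (p m k * z ^ k)) := by
          rw [mul_assoc, Finset.sum_mul, Finset.mul_sum]
          refine Finset.sum_congr rfl fun m _ => ?_
          rw [pow_succ]; ring
  rw [Finset.sum_congr rfl lhs_eq, Finset.sum_comm, Finset.mul_sum]
  refine Finset.sum_congr rfl fun m hm => ?_
  rw [hGm m hm, Finset.mul_sum, Finset.mul_sum]

lemma G_three_term (m : ℕ) (z : ℝ) :
    ((m:ℝ)+2)*((m:ℝ)+3) * G (m+2) z =
      (2*((m:ℝ)+1)*((m:ℝ)+2) + 2*z) * G (m+1) z - (m:ℝ)*((m:ℝ)+1) * G m z := by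
  set F : ℕ → ℝ := fun n => ∑ j ∈ Finset.range n, ((n:ℝ) - (j:ℝ)) * G j z with hF
  set H : ℕ → ℝ := fun n => ∑ j ∈ Finset.range n, G j z with hH
  have hstep : ∀ n : ℕ, F (n+1) = F n + H (n+1) := by
    intro n
    have c1 : F (n+1) = ∑ j ∈ Finset.range (n+1), (((n:ℝ) - (j:ℝ)) * G j z + G j z) := by
      rw [hF]
      refine Finset.sum_congr rfl fun j _ => ?_
      push_cast; ring
    rw [c1, Finset.sum_add_distrib, Finset.sum_range_succ]
    rw [hF, hH]
    simp only [sub_self, zero_mul, add_zero]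
  have h2 : ((m+2:ℕ):ℝ) * (((m+2:ℕ):ℝ)+1) * G (m+2) z = 2*z*F (m+2) := G_sum_rec (m+2) z
  have h1 : ((m+1:ℕ):ℝ) * (((m+1:ℕ):ℝ)+1) * G (m+1) z = 2*z*F (m+1) := G_sum_rec (m+1) z
  have h0 : ((m:ℕ):ℝ) * (((m:ℕ):ℝ)+1) * G m z = 2*z*F m := G_sum_rec m z
  have e2 : F (m+2) = F (m+1) + H (m+2) := hstep (m+1)
  have e1 : F (m+1) = F m + H (m+1) := hstep m
  have e0 : H (m+2) = H (m+1) + G (m+1) z := Finset.sum_range_succ _ (m+1)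
  push_cast at h2 h1 h0
  linear_combination h2 + 2*z*e2 + 2*z*e0 - 2*z*e1 - 2*h1 + h0

noncomputable def EP : ℕ → Polynomial ℝ
  | 0 => 1
  | 1 => Polynomial.X + Polynomial.C 2
  | (n+2) => (Polynomial.X + Polynomial.C (((n:ℝ)+2)*((n:ℝ)+3))) * EP (n+1)
      - Polynomial.C (((n:ℝ)+1)*((n:ℝ)+2)^2*((n:ℝ)+3)/4) * EP n

lemma c_succ (n : ℕ) : c (n+1) = 2 * c n / (((n:ℝ)+1) * ((n:ℝ)+2)) := by
  rw [c, c]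
  have f1 : ((n+1).factorial : ℝ) = ((n:ℝ)+1) * (n.factorial : ℝ) := by
    rw [Nat.factorial_succ]; push_cast; ring
  have f2 : ((n+1+1).factorial : ℝ) = ((n:ℝ)+2) * ((n+1).factorial : ℝ) := by
    rw [Nat.factorial_succ]; push_cast; ring
  have hf0 : (n.factorial : ℝ) ≠ 0 := Nat.cast_ne_zero.mpr n.factorial_ne_zero
  have hf1 : ((n+1).factorial : ℝ) ≠ 0 := Nat.cast_ne_zero.mpr (n+1).factorial_ne_zero
  rw [f2, f1]
  field_simp
  ring

lemma G_one (z : ℝ) : G 1 z = z := by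
  rw [G]
  simp [Finset.sum_range_succ, p_zero 1 le_rfl, p_diag 1]
  rw [c]
  norm_num [Nat.factorial]

lemma G_eq_EP (n : ℕ) (z : ℝ) : G (n+1) z = c (n+1) * z * (EP n).eval z := by
  induction n using Nat.strong_induction_on with
  | _ n ih =>
    match n with
    | 0 =>
      rw [G_one, EP]
      simp [c, Nat.factorial]
    | 1 =>
      have h := G_three_term 0 z
      rw [G_one] at h
      push_cast at h
      rw [EP]
      have hc : c 2 = 1/3 := by rw [c]; norm_num [Nat.factorial]
      rw [hc]
      simp only [eval_add, eval_X, eval_C]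
      nlinarith [h]
    | (m+2) =>
      have h := G_three_term (m+1) z
      have hA := ih (m+1) (by omega)
      have hB := ih m (by omega)
      rw [hA, hB] at h
      push_cast at h
      rw [EP]
      simp only [eval_sub, eval_mul, eval_add, eval_X, eval_C]
      have d2 : c (m+2) * (((m:ℝ)+2)*((m:ℝ)+3)) = 2 * c (m+1) := by
        have hcs := c_succ (m+1)
        push_cast at hcs
        rw [show m+1+1 = m+2 from rfl] at hcs
        rw [hcs]
        rw [div_mul_eq_mul_div, div_eq_iff (by positivity)]; ring
      have d3 : c (m+3) * (((m:ℝ)+3)*((m:ℝ)+4)) = 2 * c (m+2) := by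
        have hcs := c_succ (m+2)
        push_cast at hcs
        rw [show m+2+1 = m+3 from rfl] at hcs
        rw [hcs]
        rw [div_mul_eq_mul_div, div_eq_iff (by positivity)]; ring
      rw [show m+1+1 = m+2 from rfl] at h
      rw [show m+2+1 = m+3 from rfl]
      rw [show m+1+2 = m+3 from rfl] at h
      apply mul_left_cancel₀ (show ((m:ℝ)+3)*((m:ℝ)+4) ≠ 0 by positivity)
      linear_combination h
        - z * ((z + ((m:ℝ)+2)*((m:ℝ)+3)) * eval z (EP (m+1))
            - ((m:ℝ)+1)*((m:ℝ)+2)^2*((m:ℝ)+3)/4 * eval z (EP m)) * d3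
        + z * eval z (EP m) * (((m:ℝ)+1)*((m:ℝ)+2)/2) * d2

lemma EP_monic (n : ℕ) : (EP n).Monic ∧ (EP n).natDegree = n := by
  induction n using Nat.strong_induction_on with
  | _ n ih =>
    match n with
    | 0 => exact ⟨monic_one, natDegree_one⟩
    | 1 => exact ⟨monic_X_add_C 2, natDegree_X_add_C 2⟩
    | (m+2) =>
      obtain ⟨hA, hAd⟩ := ih (m+1) (by omega)
      obtain ⟨hB, hBd⟩ := ih m (by omega)
      rw [EP]
      have hprod : ((Polynomial.X + Polynomial.C (((m:ℝ)+2)*((m:ℝ)+3))) * EP (m+1)).Monic :=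
        (monic_X_add_C _).mul hA
      have hproddeg : ((Polynomial.X + Polynomial.C (((m:ℝ)+2)*((m:ℝ)+3))) * EP (m+1)).natDegree
          = m + 2 := by
        rw [natDegree_mul (monic_X_add_C _).ne_zero hA.ne_zero, natDegree_X_add_C, hAd]
        omega
      have hdeglt : (Polynomial.C (((m:ℝ)+1)*((m:ℝ)+2)^2*((m:ℝ)+3)/4) * EP m).degree
          < ((Polynomial.X + Polynomial.C (((m:ℝ)+2)*((m:ℝ)+3))) * EP (m+1)).degree := by
        have h1 : (Polynomial.C (((m:ℝ)+1)*((m:ℝ)+2)^2*((m:ℝ)+3)/4) * EP m).degree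
            ≤ (m : WithBot ℕ) := by
          refine le_trans (degree_mul_le _ _) ?_
          have : (Polynomial.C (((m:ℝ)+1)*((m:ℝ)+2)^2*((m:ℝ)+3)/4)).degree ≤ 0 := degree_C_le
          have h2 : (EP m).degree ≤ (m : WithBot ℕ) := by
            rw [degree_eq_natDegree hB.ne_zero, hBd]
          calc (Polynomial.C _).degree + (EP m).degree ≤ 0 + (m : WithBot ℕ) :=
                add_le_add this h2
            _ = (m : WithBot ℕ) := by rw [zero_add]
        have h3 : ((Polynomial.X + Polynomial.C (((m:ℝ)+2)*((m:ℝ)+3))) * EP (m+1)).degree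
            = ((m+2 : ℕ) : WithBot ℕ) := by
          rw [degree_eq_natDegree hprod.ne_zero, hproddeg]
        rw [h3]
        refine lt_of_le_of_lt h1 ?_
        exact_mod_cast Nat.lt_succ_of_lt (Nat.lt_succ_self m)
      refine ⟨hprod.sub_of_left hdeglt, ?_⟩
      have hlt2 : (Polynomial.C (((m:ℝ)+1)*((m:ℝ)+2)^2*((m:ℝ)+3)/4) * EP m).natDegree
          < ((Polynomial.X + Polynomial.C (((m:ℝ)+2)*((m:ℝ)+3))) * EP (m+1)).natDegree := by
        rw [hproddeg]
        calc (Polynomial.C (((m:ℝ)+1)*((m:ℝ)+2)^2*((m:ℝ)+3)/4) * EP m).natDegree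
            ≤ (Polynomial.C (((m:ℝ)+1)*((m:ℝ)+2)^2*((m:ℝ)+3)/4)).natDegree + (EP m).natDegree :=
              natDegree_mul_le
          _ ≤ 0 + m := by rw [natDegree_C, hBd]
          _ < m + 2 := by omega
      rw [natDegree_sub_eq_left_of_natDegree_lt hlt2, hproddeg]

lemma EP_eval_zero (n : ℕ) : (EP n).eval 0 = (((n+1).factorial : ℝ))^2 / 2^n := by
  induction n using Nat.strong_induction_on with
  | _ n ih =>
    match n with
    | 0 => simp [EP, Nat.factorial]
    | 1 => simp [EP, Nat.factorial]; norm_num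
    | (m+2) =>
      have hA := ih (m+1) (by omega)
      have hB := ih m (by omega)
      rw [EP]
      simp only [eval_sub, eval_mul, eval_add, eval_X, eval_C, zero_add]
      rw [hA, hB]
      have f1 : ((m+1+1).factorial : ℝ) = ((m:ℝ)+2) * ((m+1).factorial : ℝ) := by
        rw [Nat.factorial_succ]; push_cast; ring
      have f2 : ((m+2+1).factorial : ℝ) = ((m:ℝ)+3) * ((m+1+1).factorial : ℝ) := by
        rw [Nat.factorial_succ]; push_cast; ring
    
      rw [f2, f1]
      have hf : ((m+1).factorial : ℝ) ≠ 0 := Nat.cast_ne_zero.mpr (m+1).factorial_ne_zero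
      have h2 : (2:ℝ)^m ≠ 0 := by positivity
      field_simp
      ring

lemma prod_flip {m : ℕ} (w : Fin m → ℝ) (x : ℝ) :
    ∏ j, (x - w j) = (-1)^m * ∏ j, (w j - x) := by
  calc ∏ j, (x - w j) = ∏ j : Fin m, ((-1) * (w j - x)) :=
        Finset.prod_congr rfl fun j _ => by ring
    _ = (∏ _j : Fin m, (-1:ℝ)) * ∏ j, (w j - x) := Finset.prod_mul_distrib
    _ = (-1)^m * ∏ j, (w j - x) := by rw [Finset.prod_const]; simp

lemma exists_root_between {f : Polynomial ℝ} {a b : ℝ} (hab : a < b)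
    (h : f.eval a * f.eval b < 0) : ∃ x, a < x ∧ x < b ∧ f.eval x = 0 := by
  have hc : ContinuousOn (fun x => f.eval x) (Set.Icc a b) := f.continuous.continuousOn
  rcases lt_or_ge (f.eval a) 0 with ha | ha
  · have hb : 0 < f.eval b := by nlinarith
    have : (0:ℝ) ∈ Set.Ioo (f.eval a) (f.eval b) := ⟨ha, hb⟩
    obtain ⟨x, hx, hfx⟩ := intermediate_value_Ioo hab.le hc this
    exact ⟨x, hx.1, hx.2, hfx⟩
  · have ha' : 0 < f.eval a := by
      rcases ha.lt_or_eq with h' | h'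
      · exact h'
      · exfalso; rw [← h'] at h; simp at h
    have hb : f.eval b < 0 := by nlinarith
    have : (0:ℝ) ∈ Set.Ioo (f.eval b) (f.eval a) := ⟨hb, ha'⟩
    obtain ⟨x, hx, hfx⟩ := intermediate_value_Ioo' hab.le hc this
    exact ⟨x, hx.1, hx.2, hfx⟩

lemma monic_eq_prod_of_roots {m : ℕ} (hm0 : 0 < m) {P : Polynomial ℝ} (hm : P.Monic) (hd : P.natDegree = m)
    {t : Fin m → ℝ} (hinj : Function.Injective t) (hr : ∀ k, P.eval (t k) = 0) :
    ∀ z, P.eval z = ∏ k, (z - t k) := by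
  have hQm : (∏ k : Fin m, (X - C (t k))).Monic :=
    monic_prod_of_monic _ _ fun k _ => monic_X_sub_C _
  have hQd : (∏ k : Fin m, (X - C (t k))).natDegree = m := by
    rw [natDegree_prod_of_monic _ _ fun k _ => monic_X_sub_C _]
    simp [natDegree_X_sub_C]
  have hD : P - ∏ k : Fin m, (X - C (t k)) = 0 := by
    set D := P - ∏ k : Fin m, (X - C (t k)) with hDdef
    have hDdeg : D.natDegree < m := by
      rcases eq_or_ne D 0 with h0 | h0
      · rw [h0]; simpa using hm0
      · have hle : D.natDegree ≤ m := by
          refine le_trans (natDegree_sub_le _ _) ?_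
          simp [hd, hQd]
        rcases hle.lt_or_eq with h | h
        · exact h
        · exfalso
          apply h0
          apply leadingCoeff_eq_zero.mp
          rw [leadingCoeff, h, hDdef, coeff_sub]
          have e1 : P.coeff m = 1 := by
            have := hm.coeff_natDegree; rwa [hd] at this
          have e2 : (∏ k : Fin m, (X - C (t k))).coeff m = 1 := by
            have := hQm.coeff_natDegree; rwa [hQd] at this
          rw [e1, e2, sub_self]
    have := eq_zero_of_natDegree_lt_card_of_eval_eq_zero D hinj (fun k => ?_) ?_
    · exact this
    · rw [hDdef, eval_sub, hr k, eval_prod, zero_sub]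
      simp only [eval_sub, eval_X, eval_C]
      rw [Finset.prod_eq_zero (Finset.mem_univ k) (by ring)]
      ring
    · simpa using hDdeg
  intro z
  have : P = ∏ k : Fin m, (X - C (t k)) := by linear_combination (norm := ring_nf) hD
  rw [this, eval_prod]
  simp

lemma exists_roots (n : ℕ) : ∃ (r : Fin n → ℝ) (s : Fin (n+1) → ℝ),
    StrictMono r ∧ StrictMono s ∧ (∀ k, r k < 0) ∧ (∀ k, s k < 0) ∧
    (∀ z, (EP n).eval z = ∏ k, (z - r k)) ∧
    (∀ z, (EP (n+1)).eval z = ∏ k, (z - s k)) ∧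
    (∀ j : Fin n, s j.castSucc < r j ∧ r j < s j.succ) := by
  induction n with
  | zero =>
    refine ⟨Fin.elim0, fun _ => -2, fun a => a.elim0,
      fun a b h => by have := a.isLt; have := b.isLt; rw [Fin.lt_def] at h; omega,
      fun a => a.elim0, fun _ => by norm_num, ?_, ?_, fun a => a.elim0⟩
    · intro z; simp [EP]
    · intro z
      rw [show EP 1 = Polynomial.X + Polynomial.C 2 from rfl]
      simp [Fin.prod_univ_one]
  | succ n ih =>
    obtain ⟨r, s, hrm, hsm, hrneg, hsneg, hrprod, hsprod, hint⟩ := ih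
    set γ : ℝ := ((n:ℝ)+1)*((n:ℝ)+2)^2*((n:ℝ)+3)/4 with hγdef
    have hγ : 0 < γ := by rw [hγdef]; positivity
    set B : ℝ := ((n:ℝ)+2)*((n:ℝ)+3) with hBdef
    have hev : ∀ z, (EP (n+2)).eval z
        = (z + B) * (EP (n+1)).eval z - γ * (EP n).eval z := by
      intro z
      rw [show EP (n+2) = (Polynomial.X + Polynomial.C (((n:ℝ)+2)*((n:ℝ)+3))) * EP (n+1)
          - Polynomial.C (((n:ℝ)+1)*((n:ℝ)+2)^2*((n:ℝ)+3)/4) * EP n from rfl]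
      simp only [eval_sub, eval_mul, eval_add, eval_X, eval_C]
      rw [hBdef, hγdef]
    have hsz : ∀ k, (EP (n+1)).eval (s k) = 0 := by
      intro k
      rw [hsprod]
      exact Finset.prod_eq_zero (Finset.mem_univ k) (by ring)
    have hEs : ∀ k, (EP (n+2)).eval (s k) = -γ * ∏ j, (s k - r j) := by
      intro k
      rw [hev, hsz, hrprod]
      ring
    -- ordering facts
    have hlow : ∀ (j : Fin n) (k : Fin (n+1)), (k:ℕ) ≤ (j:ℕ) → s k < r j := by
      intro j k hk
      have h1 : s k ≤ s j.castSucc := hsm.monotone (by simp [Fin.le_def]; omega)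
      exact lt_of_le_of_lt h1 (hint j).1
    have hup : ∀ (j : Fin n) (k : Fin (n+1)), (j:ℕ) < (k:ℕ) → r j < s k := by
      intro j k hjk
      have h1 : s j.succ ≤ s k := hsm.monotone (by simp [Fin.le_def]; omega)
      exact lt_of_lt_of_le (hint j).2 h1
    -- sign at adjacent roots of EP (n+1)
    have hadj : ∀ k : Fin (n+1), (hk : (k:ℕ) < n) →
        (EP (n+2)).eval (s k) * (EP (n+2)).eval (s ⟨(k:ℕ)+1, by omega⟩) < 0 := by
      intro k hk
      set k' : Fin (n+1) := ⟨(k:ℕ)+1, by omega⟩ with hk'def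
      set j0 : Fin n := ⟨(k:ℕ), hk⟩ with hj0def
      rw [hEs k, hEs k']
      have key : (∏ j, (s k - r j)) * (∏ j, (s k' - r j)) < 0 := by
        rw [← Finset.prod_mul_distrib]
        rw [← Finset.mul_prod_erase Finset.univ _ (Finset.mem_univ j0)]
        have hneg : (s k - r j0) * (s k' - r j0) < 0 := by
          have h1 : s k < r j0 := hlow j0 k (by simp [hj0def])
          have h2 : r j0 < s k' := hup j0 k' (by simp [hj0def, hk'def])
          nlinarith
        have hpos : 0 < ∏ j ∈ Finset.univ.erase j0, (s k - r j) * (s k' - r j) := by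
          refine Finset.prod_pos fun j hj => ?_
          have hjne : j ≠ j0 := Finset.ne_of_mem_erase hj
          rcases lt_or_ge (j:ℕ) (k:ℕ) with h | h
          · have h1 : r j < s k := hup j k h
            have h2 : r j < s k' := hup j k' (by simp [hk'def]; omega)
            nlinarith
          · have hj2 : (k:ℕ) < (j:ℕ) := by
              rcases h.lt_or_eq with h' | h'
              · exact h'
              · exfalso; exact hjne (by simp [hj0def, Fin.ext_iff]; omega)
            have h1 : s k < r j := hlow j k (by omega)
            have h2 : s k' < r j := hlow j k' (by simp [hk'def]; omega)
            nlinarith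
        nlinarith
      calc (-γ * ∏ j, (s k - r j)) * (-γ * ∏ j, (s k' - r j))
          = (γ*γ) * ((∏ j, (s k - r j)) * (∏ j, (s k' - r j))) := by ring
        _ < 0 := mul_neg_of_pos_of_neg (mul_pos hγ hγ) key
    -- sign at the last root and at zero
    have hlast : ∀ k : Fin (n+1), (k:ℕ) = n → (EP (n+2)).eval (s k) < 0 := by
      intro k hk
      rw [hEs k]
      have hpos : 0 < ∏ j, (s k - r j) := by
        refine Finset.prod_pos fun j _ => ?_
        have := hup j k (by omega)
        linarith
      nlinarith
    have hzero : 0 < (EP (n+2)).eval 0 := by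
      rw [EP_eval_zero]
      have : (0:ℝ) < ((n+2+1).factorial : ℝ) := by exact_mod_cast (n+2+1).factorial_pos
      positivity
    -- choose the inner roots
    have H : ∀ k : Fin (n+1), ∃ x, s k < x ∧
        x < (if h : (k:ℕ) < n then s ⟨(k:ℕ)+1, by omega⟩ else 0) ∧
        (EP (n+2)).eval x = 0 := by
      intro k
      by_cases hk : (k:ℕ) < n
      · rw [dif_pos hk]
        refine exists_root_between ?_ (hadj k hk)
        exact hsm (by simp [Fin.lt_def])
      · rw [dif_neg hk]
        have hkn : (k:ℕ) = n := by omega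
        exact exists_root_between (hsneg k) (by nlinarith [hlast k hkn, hzero])
    choose tk htk1 htk2 htk3 using H
    -- the far-left root
    set z₀ : ℝ := min (s 0) (-B) - (γ + 1) with hz₀def
    have hz₀s : z₀ < s 0 := by
      have : z₀ ≤ s 0 - (γ+1) := by
        rw [hz₀def]
        have := min_le_left (s 0) (-B)
        linarith
      linarith
    have hz₀B : z₀ + B ≤ -(γ+1) := by
      have : z₀ ≤ -B - (γ+1) := by
        rw [hz₀def]
        have := min_le_right (s 0) (-B)
        linarith
      linarith
    have hfarneg : (EP (n+2)).eval z₀ * (EP (n+2)).eval (s 0) < 0 := by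
      have hU : ∀ j : Fin (n+1), γ + 1 ≤ s j - z₀ := by
        intro j
        have h1 : s 0 ≤ s j := hsm.monotone (Fin.zero_le j)
        have : z₀ ≤ s 0 - (γ+1) := by
          rw [hz₀def]; have := min_le_left (s 0) (-B); linarith
        linarith
      have hV : ∀ j : Fin n, 0 < r j - z₀ ∧ r j - z₀ ≤ s j.succ - z₀ := by
        intro j
        constructor
        · have h0 : s 0 ≤ s j.castSucc := hsm.monotone (Fin.zero_le _)
          have := (hint j).1
          linarith [hz₀s]
        · have := (hint j).2; linarith
      -- M := -(z₀+B) * U - γ * V > 0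
      have hM : 0 < (-(z₀+B)) * (∏ j, (s j - z₀)) - γ * ∏ j, (r j - z₀) := by
        have hW : (0:ℝ) < ∏ j : Fin n, (s j.succ - z₀) :=
          Finset.prod_pos fun j _ => lt_of_lt_of_le (hV j).1 (hV j).2
        have hVW : ∏ j : Fin n, (r j - z₀) ≤ ∏ j : Fin n, (s j.succ - z₀) :=
          Finset.prod_le_prod (fun j _ => (hV j).1.le) (fun j _ => (hV j).2)
        have hUsplit : ∏ j : Fin (n+1), (s j - z₀)
            = (s 0 - z₀) * ∏ j : Fin n, (s j.succ - z₀) := Fin.prod_univ_succ _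
        have hA : γ + 1 ≤ -(z₀+B) := by linarith
        have h0 : γ + 1 ≤ s 0 - z₀ := hU 0
        have hVpos : (0:ℝ) < ∏ j : Fin n, (r j - z₀) :=
          Finset.prod_pos fun j _ => (hV j).1
        rw [hUsplit]
        have step1 : γ * ∏ j : Fin n, (r j - z₀) ≤ γ * ∏ j : Fin n, (s j.succ - z₀) := by
          exact mul_le_mul_of_nonneg_left hVW hγ.le
        have step2 : (γ+1) * ∏ j : Fin n, (s j.succ - z₀)
            ≤ ((γ+1) * (s 0 - z₀)) * ∏ j : Fin n, (s j.succ - z₀) := by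
          have h1 : (γ+1) ≤ (γ+1) * (s 0 - z₀) := by nlinarith
          exact mul_le_mul_of_nonneg_right h1 hW.le
        have step3 : ((γ+1) * (s 0 - z₀)) * ∏ j : Fin n, (s j.succ - z₀)
            ≤ (-(z₀+B)) * ((s 0 - z₀) * ∏ j : Fin n, (s j.succ - z₀)) := by
          have h1 : (γ+1) * (s 0 - z₀) ≤ (-(z₀+B)) * (s 0 - z₀) := by nlinarith
          calc ((γ+1) * (s 0 - z₀)) * ∏ j : Fin n, (s j.succ - z₀)
              ≤ ((-(z₀+B)) * (s 0 - z₀)) * ∏ j : Fin n, (s j.succ - z₀) :=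
                mul_le_mul_of_nonneg_right h1 hW.le
            _ = (-(z₀+B)) * ((s 0 - z₀) * ∏ j : Fin n, (s j.succ - z₀)) := by ring
        nlinarith
      -- eval z₀ = (-1)^n * M
      have hevz₀ : (EP (n+2)).eval z₀
          = (-1)^n * ((-(z₀+B)) * (∏ j, (s j - z₀)) - γ * ∏ j, (r j - z₀)) := by
        rw [hev, hsprod, hrprod, prod_flip s z₀, prod_flip r z₀]
        rw [pow_succ]
        ring
      have hevs0 : (EP (n+2)).eval (s 0) = (-1)^n * (-γ * ∏ j, (r j - s 0)) := by
        rw [hEs 0, prod_flip r (s 0)]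
        ring
      have hV0 : (0:ℝ) < ∏ j, (r j - s 0) := by
        refine Finset.prod_pos fun j _ => ?_
        have := hlow j 0 (by simp)
        linarith
      rw [hevz₀, hevs0]
      have hsq : ((-1:ℝ)^n) * ((-1:ℝ)^n) = 1 := by
        rw [← pow_add, ← two_mul, pow_mul]
        norm_num
      have expand : ((-1:ℝ)^n * ((-(z₀+B)) * (∏ j, (s j - z₀)) - γ * ∏ j, (r j - z₀)))
          * ((-1)^n * (-γ * ∏ j, (r j - s 0)))
          = (((-1:ℝ)^n) * ((-1:ℝ)^n)) * (((-(z₀+B)) * (∏ j, (s j - z₀)) - γ * ∏ j, (r j - z₀))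
            * (-γ * ∏ j, (r j - s 0))) := by ring
      rw [expand, hsq, one_mul]
      have hneg2 : -γ * ∏ j, (r j - s 0) < 0 := by nlinarith [mul_pos hγ hV0]
      exact mul_neg_of_pos_of_neg hM hneg2
    obtain ⟨t0, ht01, ht02, ht03⟩ := exists_root_between hz₀s hfarneg
    -- assemble t
    set t : Fin (n+2) → ℝ := Fin.cons t0 tk with htdef
    have ht_succ : ∀ k : Fin (n+1), t k.succ = tk k := fun k => by
      rw [htdef]; simp
    have ht_zero : t 0 = t0 := by rw [htdef]; simp
    -- new interlacing
    have hintnew : ∀ j : Fin (n+1), t j.castSucc < s j ∧ s j < t j.succ := by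
      intro j
      constructor
      · refine Fin.cases ?_ ?_ j
        · rw [show (0 : Fin (n+1)).castSucc = 0 from rfl, ht_zero]
          exact ht02
        · intro i
          rw [← Fin.succ_castSucc, ht_succ]
          have h2 := htk2 i.castSucc
          rw [dif_pos (by simp : ((i.castSucc : Fin (n+1)):ℕ) < n)] at h2
          refine lt_of_lt_of_le h2 ?_
          refine le_of_eq ?_
          congr 1
      · rw [ht_succ]; exact htk1 j
    have htm : StrictMono t := by
      rw [Fin.strictMono_iff_lt_succ]
      intro i
      exact lt_trans (hintnew i).1 (hintnew i).2
    have htneg : ∀ k, t k < 0 := by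
      intro k
      refine Fin.cases ?_ ?_ k
      · rw [ht_zero]
        calc t0 < s 0 := ht02
          _ < 0 := hsneg 0
      · intro i
        rw [ht_succ]
        have h2 := htk2 i
        by_cases hi : (i:ℕ) < n
        · rw [dif_pos hi] at h2
          exact lt_trans h2 (hsneg _)
        · rw [dif_neg hi] at h2
          exact h2
    have htroot : ∀ k, (EP (n+2)).eval (t k) = 0 := by
      intro k
      refine Fin.cases ?_ ?_ k
      · rw [ht_zero]; exact ht03
      · intro i; rw [ht_succ]; exact htk3 i
    have htprod : ∀ z, (EP (n+2)).eval z = ∏ k, (z - t k) :=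
      monic_eq_prod_of_roots (by omega) (EP_monic (n+2)).1 (EP_monic (n+2)).2
        htm.injective htroot
    exact ⟨s, t, hsm, htm, hsneg, htneg, hsprod, htprod, hintnew⟩

/-- Theorem 4: for every `n ≥ 1` the probability generating function `G_n` has leading
coefficient `p_n^{(n)} = 2^n/(n!(n+1)!)` and factors into `n` distinct real linear
factors with roots `r_1, …, r_n ∈ (−∞, 0]`, one of which is `0`:
`G_n(z) = (2^n/(n!(n+1)!)) Π_{k=1}^{n} (z − r_k)`.
In particular `G_n` is a polynomial of degree `n` all of whose roots are real,
simple and lie in `(−∞, 0]`. -/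
theorem G_real_rooted (n : ℕ) (hn : 1 ≤ n) :
    p n n = 2 ^ n / ((n.factorial : ℝ) * ((n + 1).factorial : ℝ)) ∧
      ∃ r : Fin n → ℝ, Function.Injective r ∧ (∀ k, r k ≤ 0) ∧ (∃ k₀, r k₀ = 0) ∧
        ∀ z : ℝ,
          G n z =
            2 ^ n / ((n.factorial : ℝ) * ((n + 1).factorial : ℝ)) *
              ∏ k : Fin n, (z - r k) := by
  obtain ⟨m, rfl⟩ : ∃ m, n = m + 1 := ⟨n - 1, by omega⟩
  have hc : (2:ℝ) ^ (m+1) / (((m+1).factorial : ℝ) * ((m + 1 + 1).factorial : ℝ)) = c (m+1) :=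
    rfl
  constructor
  · rw [p_diag, hc]
  · obtain ⟨r, s, hrm, hsm, hrneg, hsneg, hrprod, hsprod, hint⟩ := exists_roots m
    refine ⟨Fin.cons 0 r, ?_, ?_, ⟨0, by simp⟩, ?_⟩
    · intro a b hab
      rcases Fin.eq_zero_or_eq_succ a with rfl | ⟨a', rfl⟩ <;>
          rcases Fin.eq_zero_or_eq_succ b with rfl | ⟨b', rfl⟩
      · rfl
      · exfalso
        simp only [Fin.cons_zero, Fin.cons_succ] at hab
        have := hrneg b'
        linarith [hab]
      · exfalso
        simp only [Fin.cons_zero, Fin.cons_succ] at hab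
        have := hrneg a'
        linarith [hab]
      · simp only [Fin.cons_succ] at hab
        rw [hrm.injective hab]
    · intro k
      refine Fin.cases ?_ ?_ k
      · simp
      · intro i
        simp only [Fin.cons_succ]
        exact (hrneg i).le
    · intro z
      rw [G_eq_EP m z, hrprod z, hc, Fin.prod_univ_succ]
      simp only [Fin.cons_zero, Fin.cons_succ, sub_zero]
      ring
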